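/- arXiv:2210.02198 — 3 statements merged into one kernel-verified Lean document; each statement's English description precedes it below -/
import Mathlib

section
/- The function t ↦ p_δ(t, λ) + (ρ/2) t² is convex on ℝ whenever ρ > 1/δ. -/
noncomputable def mcp (δ lam t : ℝ) : ℝ :=
  lam * ∫ x in (0:ℝ)..|t|, max (1 - x / (δ * lam)) 0

lemma mcp_integrand_cont (c : ℝ) : Continuous fun x : ℝ => max (1 - x / c) 0 :=
  (continuous_const.sub (continuous_id'.div_const c)).max continuous_const

lemma mcp_integral_le {c s : ℝ} (hc : 0 < c) (hs : 0 ≤ s) (hsc : s ≤ c) :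
    ∫ x in (0:ℝ)..s, max (1 - x / c) 0 = s - s ^ 2 / (2 * c) := by
  have h1 : ∫ x in (0:ℝ)..s, max (1 - x / c) 0 = ∫ x in (0:ℝ)..s, (1 - x / c) := by
    apply intervalIntegral.integral_congr
    intro x hx
    rw [Set.uIcc_of_le hs] at hx
    have hx0 : 0 ≤ x := hx.1
    have hxc : x ≤ c := hx.2.trans hsc
    have : x / c ≤ 1 := (div_le_one hc).2 hxc
    simp [max_eq_left, sub_nonneg.2 this]
  rw [h1, intervalIntegral.integral_sub intervalIntegrable_const
    (((continuous_id'.div_const c).intervalIntegrable _ _)),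
    intervalIntegral.integral_div, integral_id]
  simp
  ring

lemma mcp_integral_eq {c s : ℝ} (hc : 0 < c) (hs : 0 ≤ s) :
    ∫ x in (0:ℝ)..s, max (1 - x / c) 0
      = s - s ^ 2 / (2 * c) + (max (s - c) 0) ^ 2 / (2 * c) := by
  rcases le_or_gt s c with h | h
  · rw [mcp_integral_le hc hs h, max_eq_right (by linarith)]
    ring
  · have hsplit : (∫ x in (0:ℝ)..c, max (1 - x / c) 0)
        + ∫ x in c..s, max (1 - x / c) 0 = ∫ x in (0:ℝ)..s, max (1 - x / c) 0 :=
      intervalIntegral.integral_add_adjacent_intervals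
        ((mcp_integrand_cont c).intervalIntegrable _ _)
        ((mcp_integrand_cont c).intervalIntegrable _ _)
    have h2 : ∫ x in c..s, max (1 - x / c) 0 = 0 := by
      rw [show (0:ℝ) = ∫ x in c..s, (0:ℝ) by simp]
      apply intervalIntegral.integral_congr
      intro x hx
      rw [Set.uIcc_of_le h.le] at hx
      have : 1 ≤ x / c := (one_le_div hc).2 hx.1
      simp [max_eq_right, sub_nonpos.2 this]
    have h1 : ∫ x in (0:ℝ)..c, max (1 - x / c) 0 = c - c ^ 2 / (2 * c) :=
      mcp_integral_le hc hc.le le_rfl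
    rw [← hsplit, h1, h2, max_eq_left (by linarith)]
    field_simp
    ring

theorem mcp_plus_quadratic_convex (δ lam ρ : ℝ) (hlam : 0 < lam) (hδ : 1 < δ)
    (hρ : 1 / δ < ρ) :
    ConvexOn ℝ Set.univ (fun t : ℝ => mcp δ lam t + ρ / 2 * t ^ 2) := by
  have hδ0 : (0:ℝ) < δ := by linarith
  have hc : 0 < δ * lam := mul_pos hδ0 hlam
  have habs : ConvexOn ℝ Set.univ (fun t : ℝ => |t|) := by
    exact (convexOn_univ_norm (E := ℝ)).congr fun t _ => Real.norm_eq_abs t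
  have hsq : ConvexOn ℝ Set.univ (fun t : ℝ => t ^ 2) := Even.convexOn_pow even_two
  have hmaxconv : ConvexOn ℝ Set.univ (fun t : ℝ => max (|t| - δ * lam) 0) := by
    have h1 : ConvexOn ℝ Set.univ (fun t : ℝ => |t| - δ * lam) :=
      habs.sub (concaveOn_const _ convex_univ)
    simpa [Pi.sup_def, max_comm] using h1.sup (convexOn_const 0 convex_univ)
  have hmaxsq : ConvexOn ℝ Set.univ (fun t : ℝ => (max (|t| - δ * lam) 0) ^ 2) := by
    have := hmaxconv.pow (fun x _ => le_max_right _ _) 2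
    exact this
  have hcoef1 : (0:ℝ) ≤ ρ / 2 - 1 / (2 * δ) := by
    have : 1 / δ < ρ := hρ
    rw [sub_nonneg]
    rw [div_le_div_iff₀ (by linarith) (by norm_num)]
    rw [div_lt_iff₀ hδ0] at this
    nlinarith
  have hg : ConvexOn ℝ Set.univ (fun t : ℝ =>
      lam * |t| + (ρ / 2 - 1 / (2 * δ)) * t ^ 2
        + (1 / (2 * δ)) * (max (|t| - δ * lam) 0) ^ 2) := by
    have h1 := (habs.smul hlam.le).add (hsq.smul hcoef1)
    have h2 := h1.add (hmaxsq.smul (by positivity : (0:ℝ) ≤ 1 / (2 * δ)))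
    refine h2.congr fun t _ => ?_
    simp only [Pi.add_apply, Pi.smul_apply, smul_eq_mul]
  refine hg.congr fun t _ => ?_
  show lam * |t| + (ρ / 2 - 1 / (2 * δ)) * t ^ 2
        + (1 / (2 * δ)) * (max (|t| - δ * lam) 0) ^ 2
      = mcp δ lam t + ρ / 2 * t ^ 2
  rw [mcp, mcp_integral_eq hc (abs_nonneg t), sq_abs]
  field_simp
  ring
end

section
/- For ρ > 1/δ, the one-dimensional augmented Lagrangian sub-problem min_γ [ p_δ(|γ|, λ) + (ρ/2)(γ − c)² ] has the closed-form minimizer γ̂ = ST(c, λ/ρ)/(1 − 1/(δρ)) if |c| ≤ δλ, and γ̂ = c if |c| > δλ, where ST(c, a) = sign(c)(|c| − a)₊ is the soft-thresholding operator. -/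
/-- Soft-thresholding operator `ST(c,a) = sign(c)(|c|−a)₊`. -/
noncomputable def softThreshold (c a : ℝ) : ℝ := Real.sign c * max (|c| - a) 0


lemma integral_max_le {a s : ℝ} (ha : 0 < a) (h0 : 0 ≤ s) (hs : s ≤ a) :
    ∫ x in (0:ℝ)..s, max (1 - x / a) 0 = s - s^2/(2*a) := by
  rw [intervalIntegral.integral_congr (g := fun x => 1 - x / a)
      (fun x hx => by
        rw [Set.uIcc_of_le h0] at hx
        exact max_eq_left (by
          have h' : x / a ≤ 1 := (div_le_one ha).2 (le_trans hx.2 hs)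
          linarith))]
  rw [intervalIntegral.integral_sub (f := fun _ => (1:ℝ)) (g := fun x => x / a)
      intervalIntegrable_const (Continuous.intervalIntegrable (by continuity) _ _)]
  simp [intervalIntegral.integral_div, integral_id]
  field_simp

lemma integral_max_ge {a s : ℝ} (ha : 0 < a) (hs : a ≤ s) :
    ∫ x in (0:ℝ)..s, max (1 - x / a) 0 = a / 2 := by
  have hcont : Continuous fun x : ℝ => max (1 - x / a) 0 :=
    (continuous_const.sub (continuous_id.div_const a)).max continuous_const
  have hsplit := intervalIntegral.integral_add_adjacent_intervals
    (a := (0:ℝ)) (b := a) (c := s) (f := fun x => max (1 - x / a) 0)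
    (μ := MeasureTheory.volume)
    (hcont.intervalIntegrable _ _) (hcont.intervalIntegrable _ _)
  have h1 : ∫ x in (0:ℝ)..a, max (1 - x / a) 0 = a - a^2/(2*a) :=
    integral_max_le ha ha.le le_rfl
  have h2 : ∫ x in a..s, max (1 - x / a) 0 = 0 := by
    rw [intervalIntegral.integral_congr (g := fun _ => (0:ℝ))
        (fun x hx => by
          rw [Set.uIcc_of_le hs] at hx
          exact max_eq_right (by
            have h' : 1 ≤ x / a := (one_le_div ha).2 hx.1
            linarith))]
    simp
  rw [← hsplit, h1, h2]
  field_simp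
  ring

lemma mcp_eq_le {δ lam t : ℝ} (hlam : 0 < lam) (hδ : 0 < δ) (ht : |t| ≤ δ * lam) :
    mcp δ lam t = lam * |t| - t^2/(2*δ) := by
  have ha : 0 < δ * lam := by positivity
  rw [mcp, integral_max_le ha (abs_nonneg t) ht, sq_abs t]
  field_simp

lemma mcp_eq_ge {δ lam t : ℝ} (hlam : 0 < lam) (hδ : 0 < δ) (ht : δ * lam ≤ |t|) :
    mcp δ lam t = δ * lam^2 / 2 := by
  have ha : 0 < δ * lam := by positivity
  rw [mcp, integral_max_ge ha ht]
  ring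

/-- Minimization of `γ ↦ lam|γ| + A/2 γ² − tγ`. -/
lemma h_min {lam A t : ℝ} (hlam : 0 ≤ lam) (hA : 0 < A) (g : ℝ)
    (hg : g = Real.sign t * max (|t| - lam) 0 / A) (γ : ℝ) :
    lam * |g| + A/2 * g^2 - t * g ≤ lam * |γ| + A/2 * γ^2 - t * γ := by
  rcases lt_trichotomy t 0 with h | h | h
  · rw [Real.sign_of_neg h, abs_of_neg h] at hg
    rcases le_or_gt (-t - lam) 0 with hm | hm
    · rw [max_eq_right hm] at hg
      simp only [hg, mul_zero, zero_div, abs_zero, ne_eq]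
      nlinarith [abs_nonneg γ, neg_le_abs γ, sq_nonneg γ]
    · rw [max_eq_left hm.le] at hg
      have hgv : g = -(-t - lam) / A := by rw [hg]; ring
      have hgneg : g ≤ 0 := by
        rw [hgv]; apply div_nonpos_of_nonpos_of_nonneg <;> nlinarith
      rw [abs_of_nonpos hgneg]
      have hAg : A * g = -(-t - lam) := by rw [hgv]; field_simp
      have ht2 : t = A * g - lam := by linarith
      rw [ht2]
      nlinarith [mul_nonneg hlam (by linarith [neg_le_abs γ] : (0:ℝ) ≤ |γ| + γ),
        mul_nonneg hA.le (sq_nonneg (γ - g))]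
  · subst h
    simp only [Real.sign_zero, zero_mul, zero_div] at hg
    simp only [hg, abs_zero]
    nlinarith [abs_nonneg γ, sq_nonneg γ]
  · rw [Real.sign_of_pos h, abs_of_pos h, one_mul] at hg
    rcases le_or_gt (t - lam) 0 with hm | hm
    · rw [max_eq_right hm] at hg
      simp only [hg, zero_div, abs_zero]
      have h1 : γ ≤ |γ| := le_abs_self γ
      nlinarith [abs_nonneg γ, sq_nonneg γ]
    · rw [max_eq_left hm.le] at hg
      have hgpos : 0 ≤ g := by rw [hg]; positivity
      rw [abs_of_nonneg hgpos]
      have hAg : A * g = t - lam := by rw [hg]; field_simp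
      have ht2 : t = A * g + lam := by linarith
      rw [ht2]
      nlinarith [mul_nonneg hlam (by linarith [le_abs_self γ] : (0:ℝ) ≤ |γ| - γ),
        mul_nonneg hA.le (sq_nonneg (γ - g))]

/-- MCP thresholding rule: for `ρ > 1/δ` the minimizer of
    `γ ↦ p_δ(|γ|,λ) + (ρ/2)(γ−c)²` is `ST(c,λ/ρ)/(1−1/(δρ))` when `|c| ≤ δλ`
    and `c` when `|c| > δλ`. -/
theorem mcp_threshold_rule (δ lam ρ c : ℝ) (hlam : 0 < lam) (hδ : 1 < δ)
    (hρ : 1 / δ < ρ) :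
    ∀ γ : ℝ,
      mcp δ lam (if |c| ≤ δ * lam then softThreshold c (lam / ρ) / (1 - 1 / (δ * ρ)) else c)
          + ρ / 2 * ((if |c| ≤ δ * lam then softThreshold c (lam / ρ) / (1 - 1 / (δ * ρ)) else c) - c) ^ 2
        ≤ mcp δ lam γ + ρ / 2 * (γ - c) ^ 2 := by
  have hδ0 : (0:ℝ) < δ := by linarith
  have hρ0 : (0:ℝ) < ρ := lt_trans (by positivity) hρ
  have hA : (0:ℝ) < ρ - 1/δ := by linarith
  have hδρ : (1:ℝ) < δ * ρ := by
    have := (div_lt_iff₀ hδ0).1 hρ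
    linarith [this]
  have hden : (0:ℝ) < 1 - 1/(δ*ρ) := by
    have : 1/(δ*ρ) < 1 := by
      rw [div_lt_one (by positivity)]; exact hδρ
    linarith
  intro γ
  by_cases hc : |c| ≤ δ * lam
  · simp only [if_pos hc]
    set gh := softThreshold c (lam / ρ) / (1 - 1 / (δ * ρ)) with hgh
    -- rewrite gh in the normal form needed by h_min
    have hs : Real.sign (ρ * c) = Real.sign c := by
      rcases lt_trichotomy c 0 with h | h | h
      · rw [Real.sign_of_neg h, Real.sign_of_neg (mul_neg_of_pos_of_neg hρ0 h)]
      · simp [h]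
      · rw [Real.sign_of_pos h, Real.sign_of_pos (mul_pos hρ0 h)]
    have hm : max (|ρ * c| - lam) 0 = ρ * max (|c| - lam/ρ) 0 := by
      rw [abs_mul, abs_of_pos hρ0, mul_max_of_nonneg _ _ hρ0.le]
      congr 1
      · linear_combination lam * (mul_one_div_cancel hρ0.ne')
      · ring
    have hg_eq : gh = Real.sign (ρ*c) * max (|ρ*c| - lam) 0 / (ρ - 1/δ) := by
      rw [hgh, softThreshold, hs, hm]
      rw [div_eq_div_iff (by linarith) (by linarith)]
      field_simp
    have hkey := h_min (t := ρ*c) hlam.le hA gh hg_eq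
    have habs_gh : |gh| ≤ δ * lam := by
      rw [hg_eq, abs_div, abs_of_pos hA, abs_mul, div_le_iff₀ hA]
      have h1 : |max (|ρ*c| - lam) 0| = max (|ρ*c| - lam) 0 :=
        abs_of_nonneg (le_max_right _ _)
      rw [h1]
      have h2 : |Real.sign (ρ*c)| ≤ 1 := by
        rcases lt_trichotomy (ρ*c) 0 with h | h | h
        · rw [Real.sign_of_neg h]; norm_num
        · simp [h]
        · rw [Real.sign_of_pos h]; norm_num
      have h3 : max (|ρ*c| - lam) 0 ≤ δ * lam * (ρ - 1/δ) := by
        apply max_le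
        · have : |ρ*c| = ρ * |c| := by rw [abs_mul, abs_of_pos hρ0]
          rw [this]
          have : ρ * |c| ≤ ρ * (δ * lam) := by
            apply mul_le_mul_of_nonneg_left hc hρ0.le
          have he : δ * lam * (ρ - 1/δ) = ρ * (δ*lam) - lam := by
            linear_combination (-lam) * (mul_one_div_cancel hδ0.ne')
          linarith
        · exact mul_nonneg (by positivity) hA.le
      calc |Real.sign (ρ*c)| * max (|ρ*c| - lam) 0
          ≤ 1 * max (|ρ*c| - lam) 0 :=
            mul_le_mul_of_nonneg_right h2 (le_max_right _ _)
        _ = max (|ρ*c| - lam) 0 := one_mul _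
        _ ≤ δ * lam * (ρ - 1/δ) := h3
    have e1 : ∀ x abx : ℝ,
        lam * abx - x^2/(2*δ) + ρ/2*(x-c)^2
          = (lam * abx + (ρ - 1/δ)/2 * x^2 - (ρ*c) * x) + ρ/2 * c^2 := by
      intro x abx
      field_simp
      ring
    rw [mcp_eq_le hlam hδ0 habs_gh]
    rcases le_or_gt |γ| (δ*lam) with hγ | hγ
    · rw [mcp_eq_le hlam hδ0 hγ]
      have := hkey γ
      linarith [e1 gh |gh|, e1 γ |γ|]
    · rw [mcp_eq_ge hlam hδ0 hγ.le]
      have hc2 : lam * |c| - c^2/(2*δ) ≤ δ * lam^2/2 := by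
        rw [sub_le_iff_le_add,
          show δ*lam^2/2 + c^2/(2*δ) = (δ^2*lam^2 + c^2)/(2*δ) from by field_simp,
          le_div_iff₀ (by positivity)]
        nlinarith [sq_nonneg (|c| - δ*lam), sq_abs c]
      have := hkey c
      have h0 : (0:ℝ) ≤ ρ/2 * (γ - c)^2 := by positivity
      have hcc : ρ/2 * (c - c)^2 = 0 := by ring
      linarith [e1 gh |gh|, e1 c |c|]
  · simp only [if_neg hc]
    push_neg at hc
    rw [mcp_eq_ge hlam hδ0 hc.le]
    have hcc : ρ/2 * (c - c)^2 = 0 := by ring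
    rcases le_or_gt |γ| (δ*lam) with hγ | hγ
    · rw [mcp_eq_le hlam hδ0 hγ]
      have h1 : |c| - |γ| ≤ |γ - c| := by
        rw [abs_sub_comm]; exact abs_sub_abs_le_abs_sub c γ
      have h2 : (δ*lam - |γ|)^2 ≤ (γ - c)^2 := by
        rw [← sq_abs (γ - c)]
        apply sq_le_sq'
        · linarith [abs_nonneg (γ - c), abs_nonneg γ]
        · linarith
      obtain ⟨u, hu1, hu2⟩ : ∃ u, |γ| = u ∧ γ^2 = u^2 := ⟨|γ|, rfl, (sq_abs γ).symm⟩
      rw [hu1] at h2 ⊢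
      rw [hu2, hcc, add_zero,
        show lam*u - u^2/(2*δ) + ρ/2*(γ-c)^2 = (2*δ*lam*u - u^2 + δ*ρ*(γ-c)^2)/(2*δ) from by
          field_simp,
        le_div_iff₀ (by positivity)]
      nlinarith [h2, mul_nonneg (by linarith : (0:ℝ) ≤ δ*ρ - 1) (sq_nonneg (γ-c))]
    · rw [mcp_eq_ge hlam hδ0 hγ.le]
      have h0 : (0:ℝ) ≤ ρ/2 * (γ - c)^2 := by positivity
      linarith
end

section
/- The efficiency gain of fusion: if S = S̃Π with Π a partition membership matrix of full column rank and V symmetric positive definite, then for any unit vector u in the fused parameter space, the asymptotic variance of the fused estimator satisfies u^T (S^T V^{-1} S)^{-1} u ≤ u^T Π^+ (S̃^T V^{-1} S̃)^{-1} (Π^+)^T u, where Π^+ = (Π^T Π)^{-1} Π^T; that is, the fused (oracle) estimator is at least as efficient as averaging the unfused estimators. -/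
open Matrix

private lemma mulVec_inj_of_rank {d m : ℕ} (M : Matrix (Fin d) (Fin m) ℝ)
    (h : M.rank = m) : Function.Injective M.mulVec := by
  have hker : LinearMap.ker M.mulVecLin = ⊥ := by
    have h1 := M.mulVecLin.finrank_range_add_finrank_ker
    rw [show Module.finrank ℝ (LinearMap.range M.mulVecLin) = m from h] at h1
    simp only [Module.finrank_pi, Fintype.card_fin] at h1
    have : Module.finrank ℝ (LinearMap.ker M.mulVecLin) = 0 := by omega
    exact Submodule.finrank_eq_zero.mp this
  have : Function.Injective M.mulVecLin := LinearMap.ker_eq_bot.mp hker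
  exact this

private lemma posDef_conj {n k : ℕ} {A : Matrix (Fin n) (Fin n) ℝ} (hA : A.PosDef)
    (B : Matrix (Fin n) (Fin k) ℝ) (hB : Function.Injective B.mulVec) :
    (Bᵀ * A * B).PosDef := by
  rw [posDef_iff_dotProduct_mulVec]
  constructor
  · have := isHermitian_conjTranspose_mul_mul B hA.isHermitian
    rwa [B.conjTranspose_eq_transpose_of_trivial] at this
  · intro x hx
    have hBx : B *ᵥ x ≠ 0 := by
      intro hc
      apply hx
      apply hB
      simpa using hc
    have := hA.dotProduct_mulVec_pos hBx
    simpa [star_trivial, mul_assoc, ← mulVec_mulVec, dotProduct_mulVec, vecMul_transpose,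
      ← mulVec_transpose] using this

private lemma cs_psd {n : ℕ} {A : Matrix (Fin n) (Fin n) ℝ} (hA : A.PosSemidef)
    (x y : Fin n → ℝ) :
    (x ⬝ᵥ (A *ᵥ y)) ^ 2 ≤ (x ⬝ᵥ (A *ᵥ x)) * (y ⬝ᵥ (A *ᵥ y)) := by
  have hAt : Aᵀ = A := by
    have := hA.1
    rwa [Matrix.IsHermitian, conjTranspose_eq_transpose_of_trivial] at this
  have hsym : ∀ a b : Fin n → ℝ, a ⬝ᵥ (A *ᵥ b) = b ⬝ᵥ (A *ᵥ a) := by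
    intro a b
    rw [dotProduct_mulVec, ← mulVec_transpose, hAt, dotProduct_comm]
  have key : ∀ t : ℝ, 0 ≤ (y ⬝ᵥ (A *ᵥ y)) * (t * t) + (2 * (x ⬝ᵥ (A *ᵥ y))) * t
      + (x ⬝ᵥ (A *ᵥ x)) := by
    intro t
    have h0 := hA.dotProduct_mulVec_nonneg (x + t • y)
    rw [star_trivial] at h0
    have e : (x + t • y) ⬝ᵥ (A *ᵥ (x + t • y))
        = (y ⬝ᵥ (A *ᵥ y)) * (t * t) + (2 * (x ⬝ᵥ (A *ᵥ y))) * t + (x ⬝ᵥ (A *ᵥ x)) := by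
      rw [mulVec_add, mulVec_smul, dotProduct_add, add_dotProduct, add_dotProduct,
        smul_dotProduct, smul_dotProduct, dotProduct_smul, dotProduct_smul,
        hsym y x]
      simp only [smul_eq_mul]
      ring
    rw [e] at h0
    exact h0
  have hd := discrim_le_zero key
  rw [discrim] at hd
  nlinarith [hd]

private lemma conj_dot {a b : ℕ} (M N : Matrix (Fin a) (Fin b) ℝ)
    (A : Matrix (Fin a) (Fin a) ℝ) (u v : Fin b → ℝ) :
    (M *ᵥ u) ⬝ᵥ (A *ᵥ (N *ᵥ v)) = u ⬝ᵥ ((Mᵀ * A * N) *ᵥ v) := by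
  rw [mulVec_mulVec, dotProduct_mulVec, vecMul_mulVec, ← dotProduct_mulVec,
    Matrix.mul_assoc]

/-- Efficiency gain of fusion: the fused (oracle) estimator is at least as
    efficient as averaging the unfused estimators within partition sets, i.e.
    `uᵀ(SᵀV⁻¹S)⁻¹u ≤ uᵀ Π⁺ (S̃ᵀV⁻¹S̃)⁻¹ (Π⁺)ᵀ u` with
    `Π⁺ = (ΠᵀΠ)⁻¹Πᵀ`. -/
theorem fusion_efficiency (d m p : ℕ) (hpm : p ≤ m)
    (St : Matrix (Fin d) (Fin m) ℝ) (hSt : St.rank = m)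
    (Pi : Matrix (Fin m) (Fin p) ℝ) (hPi : Pi.rank = p)
    (V : Matrix (Fin d) (Fin d) ℝ) (hV : V.PosDef) (hVsym : V.IsSymm)
    (u : Fin p → ℝ) (hu : ∑ r, u r ^ 2 = 1) :
    u ⬝ᵥ (((St * Pi)ᵀ * V⁻¹ * (St * Pi))⁻¹ *ᵥ u)
      ≤ u ⬝ᵥ ((((Piᵀ * Pi)⁻¹ * Piᵀ) * (Stᵀ * V⁻¹ * St)⁻¹ * ((Piᵀ * Pi)⁻¹ * Piᵀ)ᵀ) *ᵥ u) := by
  set A := Stᵀ * V⁻¹ * St with hAdef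
  set G := Piᵀ * Pi with hGdef
  set B := Piᵀ * A * Pi with hBdef
  have hVi : V⁻¹.PosDef := hV.inv
  have hStInj := mulVec_inj_of_rank St hSt
  have hPiInj := mulVec_inj_of_rank Pi hPi
  have hA : A.PosDef := posDef_conj hVi St hStInj
  have hB : B.PosDef := posDef_conj hA Pi hPiInj
  have hG : G.PosDef := by
    have := posDef_conj Matrix.PosDef.one Pi hPiInj
    rwa [Matrix.mul_one] at this
  have hAdet : IsUnit A.det := (Matrix.isUnit_iff_isUnit_det A).mp hA.isUnit
  have hBdet : IsUnit B.det := (Matrix.isUnit_iff_isUnit_det B).mp hB.isUnit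
  have hGdet : IsUnit G.det := (Matrix.isUnit_iff_isUnit_det G).mp hG.isUnit
  have symmOf : ∀ {k : ℕ} {M : Matrix (Fin k) (Fin k) ℝ}, M.PosDef → Mᵀ = M := by
    intro k M hM
    have := hM.isHermitian
    rwa [Matrix.IsHermitian, conjTranspose_eq_transpose_of_trivial] at this
  have hAt : Aᵀ = A := symmOf hA
  have hBt : Bᵀ = B := symmOf hB
  have hGt : Gᵀ = G := symmOf hG
  have hAit : A⁻¹ᵀ = A⁻¹ := by rw [transpose_nonsing_inv, hAt]
  have hBit : B⁻¹ᵀ = B⁻¹ := by rw [transpose_nonsing_inv, hBt]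
  have hGit : G⁻¹ᵀ = G⁻¹ := by rw [transpose_nonsing_inv, hGt]
  -- rewrite the goal matrices
  have hLHS : (St * Pi)ᵀ * V⁻¹ * (St * Pi) = B := by
    rw [transpose_mul, hBdef, hAdef]
    simp [Matrix.mul_assoc]
  have hu0 : u ≠ 0 := by
    intro h
    rw [h] at hu
    simp at hu
  -- the vectors for Cauchy–Schwarz
  set x := (Pi * B⁻¹) *ᵥ u with hxdef
  set y := (A⁻¹ * Pi * G⁻¹) *ᵥ u with hydef
  have ex : x ⬝ᵥ (A *ᵥ x) = u ⬝ᵥ (B⁻¹ *ᵥ u) := by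
    have hM : (Pi * B⁻¹)ᵀ * A * (Pi * B⁻¹) = B⁻¹ := by
      rw [transpose_mul, hBit]
      calc B⁻¹ * Piᵀ * A * (Pi * B⁻¹)
          = B⁻¹ * (Piᵀ * A * Pi) * B⁻¹ := by simp [Matrix.mul_assoc]
        _ = B⁻¹ := by rw [← hBdef, Matrix.nonsing_inv_mul B hBdet, Matrix.one_mul]
    rw [hxdef, conj_dot, hM]
  have exy : x ⬝ᵥ (A *ᵥ y) = u ⬝ᵥ (B⁻¹ *ᵥ u) := by
    have hM : (Pi * B⁻¹)ᵀ * A * (A⁻¹ * Pi * G⁻¹) = B⁻¹ := by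
      rw [transpose_mul, hBit]
      calc B⁻¹ * Piᵀ * A * (A⁻¹ * Pi * G⁻¹)
          = B⁻¹ * (Piᵀ * (A * A⁻¹) * Pi) * G⁻¹ := by simp [Matrix.mul_assoc]
        _ = B⁻¹ * G * G⁻¹ := by rw [Matrix.mul_nonsing_inv A hAdet, Matrix.mul_one, hGdef]
        _ = B⁻¹ := by rw [Matrix.mul_assoc, Matrix.mul_nonsing_inv G hGdet, Matrix.mul_one]
    rw [hxdef, hydef, conj_dot, hM]
  have ey : y ⬝ᵥ (A *ᵥ y)
      = u ⬝ᵥ (((G⁻¹ * Piᵀ) * A⁻¹ * (G⁻¹ * Piᵀ)ᵀ) *ᵥ u) := by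
    have h2 : (G⁻¹ * Piᵀ) * A⁻¹ * (G⁻¹ * Piᵀ)ᵀ
        = G⁻¹ * (Piᵀ * (A⁻¹ * (Pi * G⁻¹))) := by
      rw [transpose_mul, transpose_transpose, hGit]
      simp [Matrix.mul_assoc]
    have hM : (A⁻¹ * Pi * G⁻¹)ᵀ * A * (A⁻¹ * Pi * G⁻¹)
        = G⁻¹ * (Piᵀ * (A⁻¹ * (Pi * G⁻¹))) := by
      rw [transpose_mul, transpose_mul, hGit, hAit]
      calc G⁻¹ * (Piᵀᵀᵀ * A⁻¹) * A * (A⁻¹ * Pi * G⁻¹)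
          = G⁻¹ * (Piᵀ * (A⁻¹ * (A * (A⁻¹ * (Pi * G⁻¹))))) := by simp [Matrix.mul_assoc]
        _ = G⁻¹ * (Piᵀ * (A⁻¹ * (Pi * G⁻¹))) := by
            rw [Matrix.mul_nonsing_inv_cancel_left A _ hAdet]
    rw [hydef, conj_dot, hM, h2]
  have hcs := cs_psd hA.posSemidef x y
  rw [ex, exy, ey] at hcs
  have hL : 0 < u ⬝ᵥ (B⁻¹ *ᵥ u) := by
    have := hB.inv.dotProduct_mulVec_pos hu0
    rwa [star_trivial] at this
  rw [hLHS]
  nlinarith [hcs, hL]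
end
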